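/- Set M := 1 + (2π)^{-d/2} e^{2κ} ‖φ‖_{L¹(ℝ^d)} and m := sup_{t ∈ [-1, +∞)} |F(t)| (the supremum over real t ≥ -1). Then for every z ∈ ℂ with Re z ≥ -1, Im z ≤ 0 and z ≠ -1, one has |F(z)| ≤ M · m^{w(z)}, where w(z) = (2/π)(π/2 + arg(z+1)). -/

import Mathlib

open Complex Real MeasureTheory

section aux
variable {d : ℕ} {ξ : EuclideanSpace ℝ (Fin d)} {κ : ℝ} {φ : EuclideanSpace ℝ (Fin d) → ℂ}

lemma aux_cont : Continuous (fun x : EuclideanSpace ℝ (Fin d) => ((inner ℝ x ξ : ℝ) : ℂ)) :=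
  Complex.continuous_ofReal.comp (continuous_id.inner continuous_const)

lemma aux_norm_mul (hξ : ‖ξ‖ = 1)
    (hsupp : ∀ x, x ∉ Metric.closedBall (0 : EuclideanSpace ℝ (Fin d)) κ → φ x = 0)
    (z : ℂ) (x : EuclideanSpace ℝ (Fin d)) :
    ‖Complex.exp (z * ((inner ℝ x ξ : ℝ) : ℂ)) * φ x‖ ≤ Real.exp (|z.re| * κ) * ‖φ x‖ := by
  by_cases h : φ x = 0
  · simp [h]
  · have hx : ‖x‖ ≤ κ := by
      by_contra hc
      exact h (hsupp x (by simpa [Metric.mem_closedBall, dist_eq_norm] using hc))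
    have hc : |(inner ℝ x ξ : ℝ)| ≤ κ := by
      calc |(inner ℝ x ξ : ℝ)| ≤ ‖x‖ * ‖ξ‖ := abs_real_inner_le_norm x ξ
        _ = ‖x‖ := by rw [hξ, mul_one]
        _ ≤ κ := hx
    rw [norm_mul, Complex.norm_exp]
    have hre : (z * ((inner ℝ x ξ : ℝ) : ℂ)).re = z.re * (inner ℝ x ξ : ℝ) := by
      simp [Complex.mul_re]
    apply mul_le_mul_of_nonneg_right _ (norm_nonneg _)
    rw [hre]
    apply Real.exp_le_exp.2
    calc z.re * (inner ℝ x ξ : ℝ) ≤ |z.re * (inner ℝ x ξ : ℝ)| := le_abs_self _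
      _ = |z.re| * |(inner ℝ x ξ : ℝ)| := abs_mul _ _
      _ ≤ |z.re| * κ := mul_le_mul_of_nonneg_left hc (abs_nonneg _)

lemma aux_integrable (hφ : Integrable φ) (hξ : ‖ξ‖ = 1)
    (hsupp : ∀ x, x ∉ Metric.closedBall (0 : EuclideanSpace ℝ (Fin d)) κ → φ x = 0)
    (z : ℂ) :
    Integrable (fun x => Complex.exp (z * ((inner ℝ x ξ : ℝ) : ℂ)) * φ x) := by
  apply Integrable.mono (hφ.norm.const_mul (Real.exp (|z.re| * κ)))
  · exact ((Complex.continuous_exp.comp (continuous_const.mul aux_cont)).aestronglyMeasurable).mul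
      hφ.1
  · filter_upwards with x
    simpa [_root_.abs_of_nonneg (Real.exp_nonneg _), _root_.abs_of_nonneg (norm_nonneg (φ x))] using
      aux_norm_mul hξ hsupp z x

lemma aux_int_bound (hφ : Integrable φ) (hξ : ‖ξ‖ = 1)
    (hsupp : ∀ x, x ∉ Metric.closedBall (0 : EuclideanSpace ℝ (Fin d)) κ → φ x = 0)
    (z : ℂ) :
    ‖∫ x, Complex.exp (z * ((inner ℝ x ξ : ℝ) : ℂ)) * φ x‖ ≤
      Real.exp (|z.re| * κ) * ∫ x, ‖φ x‖ := by
  rw [← integral_const_mul]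
  exact norm_integral_le_of_norm_le (hφ.norm.const_mul _)
    (Filter.Eventually.of_forall (aux_norm_mul hξ hsupp z))

end aux

section aux2
variable {d : ℕ} {ξ : EuclideanSpace ℝ (Fin d)} {κ : ℝ} {φ : EuclideanSpace ℝ (Fin d) → ℂ}

lemma aux_norm_mul' (hξ : ‖ξ‖ = 1)
    (hsupp : ∀ x, x ∉ Metric.closedBall (0 : EuclideanSpace ℝ (Fin d)) κ → φ x = 0)
    (hκ : 0 ≤ κ) (z : ℂ) (x : EuclideanSpace ℝ (Fin d)) :
    ‖Complex.exp (z * ((inner ℝ x ξ : ℝ) : ℂ)) * ((inner ℝ x ξ : ℝ) : ℂ) * φ x‖ ≤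
      Real.exp (|z.re| * κ) * κ * ‖φ x‖ := by
  by_cases h : φ x = 0
  · simp [h]
  · have hx : ‖x‖ ≤ κ := by
      by_contra hc
      exact h (hsupp x (by simpa [Metric.mem_closedBall, dist_eq_norm] using hc))
    have hc : |(inner ℝ x ξ : ℝ)| ≤ κ := by
      calc |(inner ℝ x ξ : ℝ)| ≤ ‖x‖ * ‖ξ‖ := abs_real_inner_le_norm x ξ
        _ = ‖x‖ := by rw [hξ, mul_one]
        _ ≤ κ := hx
    rw [norm_mul, norm_mul]
    apply mul_le_mul_of_nonneg_right _ (norm_nonneg _)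
    have h1 : ‖Complex.exp (z * ((inner ℝ x ξ : ℝ) : ℂ))‖ ≤ Real.exp (|z.re| * κ) := by
      rw [Complex.norm_exp]
      apply Real.exp_le_exp.2
      have hre : (z * ((inner ℝ x ξ : ℝ) : ℂ)).re = z.re * (inner ℝ x ξ : ℝ) := by
        simp [Complex.mul_re]
      rw [hre]
      calc z.re * (inner ℝ x ξ : ℝ) ≤ |z.re * (inner ℝ x ξ : ℝ)| := le_abs_self _
        _ = |z.re| * |(inner ℝ x ξ : ℝ)| := abs_mul _ _
        _ ≤ |z.re| * κ := mul_le_mul_of_nonneg_left hc (abs_nonneg _)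
    have h2 : ‖((inner ℝ x ξ : ℝ) : ℂ)‖ ≤ κ := by
      rw [Complex.norm_real, Real.norm_eq_abs]; exact hc
    exact mul_le_mul h1 h2 (norm_nonneg _) (Real.exp_nonneg _)

lemma aux_diff (hφ : Integrable φ) (hξ : ‖ξ‖ = 1)
    (hsupp : ∀ x, x ∉ Metric.closedBall (0 : EuclideanSpace ℝ (Fin d)) κ → φ x = 0)
    (hκ : 0 ≤ κ) :
    Differentiable ℂ (fun z => ∫ x, Complex.exp (z * ((inner ℝ x ξ : ℝ) : ℂ)) * φ x) := by
  intro z₀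
  have key := hasDerivAt_integral_of_dominated_loc_of_deriv_le (μ := volume)
    (F := fun z x => Complex.exp (z * ((inner ℝ x ξ : ℝ) : ℂ)) * φ x)
    (F' := fun z x => Complex.exp (z * ((inner ℝ x ξ : ℝ) : ℂ)) * ((inner ℝ x ξ : ℝ) : ℂ) * φ x)
    (x₀ := z₀) (bound := fun x => Real.exp ((|z₀.re| + 1) * κ) * κ * ‖φ x‖)
    (s := Metric.ball z₀ 1) (Metric.ball_mem_nhds z₀ one_pos)
    (Filter.Eventually.of_forall fun z =>
      ((Complex.continuous_exp.comp (continuous_const.mul aux_cont)).aestronglyMeasurable).mul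
        hφ.1)
    (aux_integrable hφ hξ hsupp z₀)
    ((((Complex.continuous_exp.comp (continuous_const.mul aux_cont)).mul
        aux_cont).aestronglyMeasurable).mul hφ.1)
    ?_ ((hφ.norm.const_mul _)) ?_
  · exact key.2.differentiableAt
  · filter_upwards with x z hz
    refine (aux_norm_mul' hξ hsupp hκ z x).trans ?_
    have : |z.re| ≤ |z₀.re| + 1 := by
      have := Complex.abs_re_le_norm (z - z₀)
      have hlt : ‖z - z₀‖ < 1 := by
        simpa [Complex.dist_eq] using Metric.mem_ball.1 hz
      have : |z.re - z₀.re| < 1 := by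
        simpa [Complex.sub_re] using lt_of_le_of_lt this hlt
      cases abs_sub_lt_iff.1 this with
      | intro h1 h2 => cases abs_cases z.re with
        | inl h => cases abs_cases z₀.re with
          | inl h' => nlinarith [abs_nonneg z₀.re]
          | inr h' => nlinarith [abs_nonneg z₀.re]
        | inr h => cases abs_cases z₀.re with
          | inl h' => nlinarith [abs_nonneg z₀.re]
          | inr h' => nlinarith [abs_nonneg z₀.re]
    have hexp : Real.exp (|z.re| * κ) ≤ Real.exp ((|z₀.re| + 1) * κ) :=
      Real.exp_le_exp.2 (mul_le_mul_of_nonneg_right this hκ)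
    gcongr
  · filter_upwards with x z hz
    have h1 : HasDerivAt (fun z : ℂ => z * ((inner ℝ x ξ : ℝ) : ℂ)) ((inner ℝ x ξ : ℝ) : ℂ) z := by
      simpa using (hasDerivAt_id z).mul_const (((inner ℝ x ξ : ℝ) : ℂ))
    exact ((Complex.hasDerivAt_exp _).comp z h1).mul_const (φ x)

end aux2

/-- Two-constants bound: with `M := 1 + (2π)^{-d/2} e^{2κ} ‖φ‖_{L¹}` and
`m := sup_{t ≥ -1} |F(t)|`, one has `|F(z)| ≤ M m^{w(z)}` for every `z` in the
closed quadrant `{Re z ≥ -1, Im z ≤ 0}` other than `-1`, where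
`w(z) = (2/π)(π/2 + arg(z+1))`. -/


theorem stmt3
    (d : ℕ) (hd : 1 ≤ d) (ξ : EuclideanSpace ℝ (Fin d)) (hξ : ‖ξ‖ = 1)
    (κ : ℝ) (hκ : 0 < κ) (s : ℕ)
    (φ : EuclideanSpace ℝ (Fin d) → ℂ) (hφ : Integrable φ)
    (hsupp : ∀ x, x ∉ Metric.closedBall (0 : EuclideanSpace ℝ (Fin d)) κ → φ x = 0)
    (F : ℂ → ℂ)
    (hF : ∀ z : ℂ, F z = (z / (2 + z)) ^ s * Complex.exp (-(κ : ℂ) * z) *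
      (((2 * Real.pi) ^ (-(d : ℝ) / 2) : ℝ) : ℂ) *
      ∫ x, Complex.exp (z * ((inner ℝ x ξ : ℝ) : ℂ)) * φ x)
    (M : ℝ) (hM : M = 1 + (2 * Real.pi) ^ (-(d : ℝ) / 2) * Real.exp (2 * κ) * ∫ x, ‖φ x‖)
    (m : ℝ) (hm : m = ⨆ t : Set.Ici (-1 : ℝ), ‖F ((t : ℝ) : ℂ)‖) :
    ∀ z : ℂ, -1 ≤ z.re → z.im ≤ 0 → z ≠ -1 →
      ‖F z‖ ≤ M * m ^ ((2 / Real.pi) * (Real.pi / 2 + Complex.arg (z + 1))) := by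
  have pi_pos := Real.pi_pos
  set c : ℝ := (2 * Real.pi) ^ (-(d : ℝ) / 2) with hcdef
  have hc0 : 0 < c := Real.rpow_pos_of_pos (by linarith) _
  have hint0 : 0 ≤ ∫ x, ‖φ x‖ := integral_nonneg fun x => norm_nonneg _
  set B : ℝ := c * Real.exp (2 * κ) * ∫ x, ‖φ x‖ with hBdef
  have hB0 : 0 ≤ B := by positivity
  have hMB : M = 1 + B := hM
  -- global bound on the half-plane Re ≥ -1
  have hbound : ∀ w : ℂ, -1 ≤ w.re → ‖F w‖ ≤ B := by
    intro w hw
    have h2w : ‖w‖ ≤ ‖(2 : ℂ) + w‖ := by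
      rw [Complex.norm_def, Complex.norm_def]
      apply Real.sqrt_le_sqrt
      rw [Complex.normSq_apply, Complex.normSq_apply]
      simp only [Complex.add_re, Complex.add_im]
      norm_num
      nlinarith
    have h2wpos : 0 < ‖(2:ℂ) + w‖ := by
      have : ((2:ℂ) + w).re = 2 + w.re := by simp
      have hne : (2:ℂ) + w ≠ 0 := by
        intro h
        rw [h] at this
        simp at this
        linarith
      simpa [norm_pos_iff] using hne
    have h1 : ‖(w / (2 + w)) ^ s‖ ≤ 1 := by
      rw [norm_pow]
      apply pow_le_one₀ (norm_nonneg _)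
      rw [norm_div]
      exact div_le_one_of_le₀ h2w (norm_nonneg _)
    have h2 : ‖Complex.exp (-(κ : ℂ) * w)‖ = Real.exp (-(κ * w.re)) := by
      rw [Complex.norm_exp]
      congr 1
      simp [Complex.mul_re]
    have h3 : ‖((c : ℝ) : ℂ)‖ = c := by
      rw [Complex.norm_real, Real.norm_eq_abs, abs_of_pos hc0]
    have h4 := aux_int_bound hφ hξ hsupp w
    calc ‖F w‖ = ‖(w / (2 + w)) ^ s‖ * ‖Complex.exp (-(κ : ℂ) * w)‖ * ‖((c : ℝ) : ℂ)‖ *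
          ‖∫ x, Complex.exp (w * ((inner ℝ x ξ : ℝ) : ℂ)) * φ x‖ := by
          rw [hF w, norm_mul, norm_mul, norm_mul]
      _ ≤ 1 * Real.exp (-(κ * w.re)) * c * (Real.exp (|w.re| * κ) * ∫ x, ‖φ x‖) := by
          exact mul_le_mul (mul_le_mul (mul_le_mul h1 h2.le (norm_nonneg _) zero_le_one)
            h3.le (norm_nonneg _) (by positivity)) h4 (norm_nonneg _) (by positivity)
      _ = c * (Real.exp (-(κ * w.re)) * Real.exp (|w.re| * κ)) * ∫ x, ‖φ x‖ := by ring
      _ ≤ c * Real.exp (2 * κ) * ∫ x, ‖φ x‖ := by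
          apply mul_le_mul_of_nonneg_right _ hint0
          apply mul_le_mul_of_nonneg_left _ hc0.le
          rw [← Real.exp_add]
          apply Real.exp_le_exp.2
          rcases abs_cases w.re with ⟨h, _⟩ | ⟨h, _⟩ <;> nlinarith
  -- facts about m
  have hbdd : BddAbove (Set.range fun t : Set.Ici (-1 : ℝ) => ‖F ((t : ℝ) : ℂ)‖) := by
    refine ⟨B, ?_⟩
    rintro _ ⟨t, rfl⟩
    exact hbound _ (by rw [Complex.ofReal_re]; exact t.2)
  have hmF : ∀ t : ℝ, -1 ≤ t → ‖F ((t : ℝ) : ℂ)‖ ≤ m := by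
    intro t ht
    rw [hm]
    exact le_ciSup hbdd ⟨t, ht⟩
  have hm0 : 0 ≤ m := le_trans (norm_nonneg _) (hmF 0 (by norm_num))
  -- differentiability of F away from -2
  have hFdiff : ∀ w : ℂ, w ≠ -2 → DifferentiableAt ℂ F w := by
    intro w hw
    have hFeq : F = fun z => (z / (2 + z)) ^ s * Complex.exp (-(κ : ℂ) * z) *
        (((c : ℝ)) : ℂ) * ∫ x, Complex.exp (z * ((inner ℝ x ξ : ℝ) : ℂ)) * φ x := funext hF
    rw [hFeq]
    have h2w : (2 : ℂ) + w ≠ 0 := by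
      intro h
      apply hw
      linear_combination h
    refine DifferentiableAt.mul (DifferentiableAt.mul (DifferentiableAt.mul ?_ ?_)
      (differentiableAt_const _)) ((aux_diff hφ hξ hsupp hκ.le) w)
    · exact (differentiableAt_id.div ((differentiableAt_const _).add differentiableAt_id) h2w).pow s
    · exact (Complex.differentiable_exp.comp ((differentiable_const _).mul differentiable_id)) w
  -- the conformal map from the strip to the quadrant
  set h : ℂ → ℂ := fun ζ => -1 + Complex.exp ((((Real.pi / 2 : ℝ)) : ℂ) * I * (ζ - 1)) with hhdef
  have hexp_re_im : ∀ ζ : ℂ, ((((Real.pi / 2 : ℝ)) : ℂ) * I * (ζ - 1)).re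
      = -(Real.pi / 2) * ζ.im ∧ ((((Real.pi / 2 : ℝ)) : ℂ) * I * (ζ - 1)).im
      = Real.pi / 2 * (ζ.re - 1) := by
    intro ζ
    constructor <;> simp [Complex.mul_re, Complex.mul_im] <;> ring
  have hre_exp : ∀ ζ : ℂ, ζ.re ∈ Set.Icc (0 : ℝ) 1 →
      0 ≤ (Complex.exp ((((Real.pi / 2 : ℝ)) : ℂ) * I * (ζ - 1))).re := by
    intro ζ hζ
    rw [Complex.exp_re, (hexp_re_im ζ).1, (hexp_re_im ζ).2]
    apply mul_nonneg (Real.exp_nonneg _)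
    apply Real.cos_nonneg_of_mem_Icc
    constructor
    · nlinarith [hζ.1, hζ.2, pi_pos]
    · nlinarith [hζ.1, hζ.2, pi_pos]
  have hh_re : ∀ ζ : ℂ, ζ.re ∈ Set.Icc (0 : ℝ) 1 → -1 ≤ (h ζ).re := by
    intro ζ hζ
    have := hre_exp ζ hζ
    simp only [hhdef, Complex.add_re, Complex.neg_re, Complex.one_re]
    linarith
  have hgdiff : ∀ ζ : ℂ, ζ.re ∈ Set.Icc (0 : ℝ) 1 → DifferentiableAt ℂ (F ∘ h) ζ := by
    intro ζ hζ
    have hne2 : h ζ ≠ -2 := by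
      intro hcontra
      have hre2 : (h ζ).re = -2 := by rw [hcontra]; norm_num
      have hre3 : -1 ≤ (h ζ).re := hh_re ζ hζ
      linarith
    have hhd : DifferentiableAt ℂ h ζ := by
      apply (differentiableAt_const _).add
      exact (Complex.differentiable_exp.comp
        (((differentiable_id.sub_const 1).const_mul _))) ζ
    exact (hFdiff _ hne2).comp ζ hhd
  -- boundary bounds
  have ha : ∀ ζ ∈ Complex.re ⁻¹' {(0:ℝ)}, ‖(F ∘ h) ζ‖ ≤ B := by
    intro ζ hζ
    have : ζ.re = 0 := hζ
    exact hbound _ (hh_re ζ (by rw [this]; exact ⟨le_refl _, zero_le_one⟩))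
  have hb : ∀ ζ ∈ Complex.re ⁻¹' {(1:ℝ)}, ‖(F ∘ h) ζ‖ ≤ m := by
    intro ζ hζ
    have hζre : ζ.re = 1 := hζ
    have hreal : (((Real.pi / 2 : ℝ)) : ℂ) * I * (ζ - 1) = ((-(Real.pi / 2) * ζ.im : ℝ) : ℂ) := by
      apply Complex.ext
      · rw [(hexp_re_im ζ).1]; simp
      · rw [(hexp_re_im ζ).2]; simp [hζre]
    have : h ζ = (((-1 + Real.exp (-(Real.pi / 2) * ζ.im) : ℝ)) : ℂ) := by
      rw [hhdef]
      simp only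
      rw [hreal, ← Complex.ofReal_exp]
      push_cast
      ring
    show ‖F (h ζ)‖ ≤ m
    rw [this]
    exact hmF _ (by nlinarith [Real.exp_nonneg (-(Real.pi / 2) * ζ.im)])
  have hBdd : BddAbove ((norm ∘ (F ∘ h)) ''
      Complex.HadamardThreeLines.verticalClosedStrip 0 1) := by
    refine ⟨B, ?_⟩
    rintro _ ⟨ζ, hζ, rfl⟩
    exact hbound _ (hh_re ζ hζ)
  have hd' : DiffContOnCl ℂ (F ∘ h) (Complex.HadamardThreeLines.verticalStrip 0 1) := by
    constructor
    · intro ζ hζ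
      exact (hgdiff ζ ⟨hζ.1.le, hζ.2.le⟩).differentiableWithinAt
    · intro ζ hζ
      have hmem : ζ.re ∈ Set.Icc (0 : ℝ) 1 := by
        have hsub : closure (Complex.HadamardThreeLines.verticalStrip 0 1) ⊆
            Complex.re ⁻¹' closure (Set.Ioo 0 1) :=
          Continuous.closure_preimage_subset Complex.continuous_re _
        have := hsub hζ
        rwa [closure_Ioo (zero_ne_one)] at this
      exact (hgdiff ζ hmem).continuousAt.continuousWithinAt
  -- now the specific point
  intro z hre him hne
  have hz1 : z + 1 ≠ 0 := by
    intro hcontra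
    apply hne
    linear_combination hcontra
  have harg_le : Complex.arg (z + 1) ≤ 0 := by
    rcases lt_or_eq_of_le him with h | h
    · exact (Complex.arg_neg_iff.2 (by simpa using h)).le
    · exact le_of_eq (Complex.arg_eq_zero_iff.2
        ⟨by rw [Complex.add_re, Complex.one_re]; linarith,
         by rw [Complex.add_im, Complex.one_im, h, add_zero]⟩)
  have harg_ge : -(Real.pi / 2) ≤ Complex.arg (z + 1) := by
    have : |Complex.arg (z + 1)| ≤ Real.pi / 2 :=
      Complex.abs_arg_le_pi_div_two_iff.2 (by simp; linarith)
    linarith [abs_le.1 this |>.1]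
  set ζ₀ : ℂ := 1 - ((2 / Real.pi : ℝ) : ℂ) * I * Complex.log (z + 1) with hζ₀def
  have hζ₀re : ζ₀.re = 1 + (2 / Real.pi) * Complex.arg (z + 1) := by
    rw [hζ₀def]
    simp only [Complex.sub_re, Complex.one_re, Complex.mul_re, Complex.mul_im,
      Complex.I_re, Complex.I_im, Complex.ofReal_re, Complex.ofReal_im, Complex.log_im]
    ring
  have hdiv : (2 / Real.pi) * (Real.pi / 2) = 1 := by
    rw [div_mul_div_comm, mul_comm Real.pi 2, div_self (by positivity)]
  have hw0 : 0 ≤ ζ₀.re := by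
    rw [hζ₀re]
    have h1 : (2 / Real.pi) * (-(Real.pi / 2)) ≤ (2 / Real.pi) * Complex.arg (z + 1) :=
      mul_le_mul_of_nonneg_left harg_ge (by positivity)
    nlinarith [hdiv]
  have hw1 : ζ₀.re ≤ 1 := by
    rw [hζ₀re]
    nlinarith [mul_nonpos_of_nonneg_of_nonpos (by positivity : (0:ℝ) ≤ 2 / Real.pi) harg_le]
  have hhζ₀ : h ζ₀ = z := by
    rw [hhdef]
    simp only
    have : (((Real.pi / 2 : ℝ)) : ℂ) * I * (ζ₀ - 1) = Complex.log (z + 1) := by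
      have h2 : ζ₀ - 1 = -(((2 / Real.pi : ℝ)) : ℂ) * I * Complex.log (z + 1) := by
        rw [hζ₀def]; ring
      rw [h2]
      have h3 : (((Real.pi / 2 : ℝ)) : ℂ) * I *
          (-(((2 / Real.pi : ℝ)) : ℂ) * I * Complex.log (z + 1)) =
          (((Real.pi / 2 : ℝ) : ℂ) * ((2 / Real.pi : ℝ) : ℂ)) * (-(I * I)) *
            Complex.log (z + 1) := by ring
      rw [h3, Complex.I_mul_I, ← Complex.ofReal_mul, mul_comm (Real.pi / 2) (2 / Real.pi), hdiv]
      norm_num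
    rw [this, Complex.exp_log hz1]
    ring
  have key := Complex.HadamardThreeLines.norm_le_interp_of_mem_verticalClosedStrip'
    (f := F ∘ h) (z := ζ₀) (a := B) (b := m) zero_lt_one ⟨hw0, hw1⟩ hd' hBdd ha hb
  simp only [sub_zero, div_one] at key
  rw [show (F ∘ h) ζ₀ = F z by rw [Function.comp_apply, hhζ₀]] at key
  have hexp_eq : (2 / Real.pi) * (Real.pi / 2 + Complex.arg (z + 1)) = ζ₀.re := by
    rw [hζ₀re, mul_add, hdiv]
  rw [hexp_eq]
  refine key.trans ?_
  apply mul_le_mul_of_nonneg_right _ (Real.rpow_nonneg hm0 _)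
  -- B ^ (1 - ζ₀.re) ≤ M
  rcases le_or_gt B 1 with hB1 | hB1
  · calc B ^ (1 - ζ₀.re) ≤ 1 := Real.rpow_le_one hB0 hB1 (by linarith)
      _ ≤ M := by rw [hMB]; linarith
  · calc B ^ (1 - ζ₀.re) ≤ B ^ (1 : ℝ) :=
        Real.rpow_le_rpow_of_exponent_le hB1.le (by linarith)
      _ = B := Real.rpow_one B
      _ ≤ M := by rw [hMB]; linarith
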